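/- In a 2-agent 2×2 general-sum game with u_r u_c > 0 (so the linearization matrix U has two real eigenvalues), if both agents follow GA-SPP with γ₀ and η satisfying Conditions 1–3, then from any initial strategy pair the sequence (α_k,β_k) converges to a point that is a Nash equilibrium. -/

import Mathlib

/- Framework for 2-agent 2×2 general-sum games with scalar strategies
   α, β ∈ [0,1] (the probability of the first action). -/

open Filter Topology

noncomputable section

/-- Projection of a real number onto [0, 1] (clamping). -/
def clamp (x : ℝ) : ℝ := max 0 (min 1 x)

/-- Row player's expected payoff. -/
def Vr2 (R : Matrix (Fin 2) (Fin 2) ℝ) (α β : ℝ) : ℝ :=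
  R 0 0 * (α * β) + R 0 1 * (α * (1 - β)) +
  R 1 0 * ((1 - α) * β) + R 1 1 * ((1 - α) * (1 - β))

/-- Column player's expected payoff. -/
def Vc2 (C : Matrix (Fin 2) (Fin 2) ℝ) (α β : ℝ) : ℝ :=
  C 0 0 * (α * β) + C 0 1 * (α * (1 - β)) +
  C 1 0 * ((1 - α) * β) + C 1 1 * ((1 - α) * (1 - β))

def ur2 (R : Matrix (Fin 2) (Fin 2) ℝ) : ℝ := R 0 0 + R 1 1 - R 0 1 - R 1 0
def br2 (R : Matrix (Fin 2) (Fin 2) ℝ) : ℝ := R 0 1 - R 1 1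
def uc2 (C : Matrix (Fin 2) (Fin 2) ℝ) : ℝ := C 0 0 + C 1 1 - C 0 1 - C 1 0
def bc2 (C : Matrix (Fin 2) (Fin 2) ℝ) : ℝ := C 1 0 - C 1 1

/-- ∂_α V_r(α, β) = u_r β + b_r. -/
def dVr2 (R : Matrix (Fin 2) (Fin 2) ℝ) (β : ℝ) : ℝ := ur2 R * β + br2 R

/-- ∂_β V_c(α, β) = u_c α + b_c. -/
def dVc2 (C : Matrix (Fin 2) (Fin 2) ℝ) (α : ℝ) : ℝ := uc2 C * α + bc2 C

/-- (α, β) is a Nash equilibrium of the 2×2 game. -/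
def IsNash2 (R C : Matrix (Fin 2) (Fin 2) ℝ) (α β : ℝ) : Prop :=
  α ∈ Set.Icc (0 : ℝ) 1 ∧ β ∈ Set.Icc (0 : ℝ) 1 ∧
  (∀ α' ∈ Set.Icc (0 : ℝ) 1, Vr2 R α' β ≤ Vr2 R α β) ∧
  (∀ β' ∈ Set.Icc (0 : ℝ) 1, Vc2 C α β' ≤ Vc2 C α β)

/-- δ = max entry − min entry of a 2×2 payoff matrix. -/
def spread2 (M : Matrix (Fin 2) (Fin 2) ℝ) : ℝ :=
  (Finset.univ.sup' Finset.univ_nonempty fun p : Fin 2 × Fin 2 => M p.1 p.2)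
  - (Finset.univ.inf' Finset.univ_nonempty fun p : Fin 2 × Fin 2 => M p.1 p.2)

/-- Conditions 1–3 on the initial prediction length γ₀ and the step size η. -/
def Conds2 (R C : Matrix (Fin 2) (Fin 2) ℝ) (γ₀ η : ℝ) : Prop :=
  0 < γ₀ ∧ 0 < η ∧
  4 * γ₀ ^ 2 * spread2 R * spread2 C < 1 ∧
  η < 1 / (spread2 R + spread2 C) ∧ γ₀ < 1 / (spread2 R + spread2 C)

/-- Both agents follow GA-SPP in the 2×2 game: `a`,`b` are the strategies,
`abar`,`bbar` the predictions, `γ` the prediction lengths, `η` the step size. -/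
def GASPP2Run (R C : Matrix (Fin 2) (Fin 2) ℝ) (η : ℝ)
    (γ a b abar bbar : ℕ → ℝ) : Prop :=
  ∀ k : ℕ,
    abar (k + 1) = clamp (a k + γ k * dVr2 R (b k)) ∧
    bbar (k + 1) = clamp (b k + γ k * dVc2 C (a k)) ∧
    ((abar (k + 1) = a k ∧ bbar (k + 1) = b k) →
        a (k + 1) = a k ∧ b (k + 1) = b k ∧ γ (k + 1) = γ k) ∧
    (¬(abar (k + 1) = a k ∧ bbar (k + 1) = b k) →
        a (k + 1) = clamp (a k + η * dVr2 R (bbar (k + 1))) ∧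
        b (k + 1) = clamp (b k + η * dVc2 C (abar (k + 1))) ∧
        ((a (k + 1) = a k ∧ b (k + 1) = b k) →
            ∃ μ : ℝ, 0 < μ ∧ μ < 1 ∧ γ (k + 1) = μ * γ k) ∧
        (¬(a (k + 1) = a k ∧ b (k + 1) = b k) → γ (k + 1) = γ k))

/-- The row agent follows GA-SPP while the column agent follows basic
gradient ascent (GA), based on the opponent's current strategy. -/
def GASPP2vsGARun (R C : Matrix (Fin 2) (Fin 2) ℝ) (η : ℝ)
    (γ a b abar bbar : ℕ → ℝ) : Prop :=
  ∀ k : ℕ,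
    abar (k + 1) = clamp (a k + γ k * dVr2 R (b k)) ∧
    bbar (k + 1) = clamp (b k + γ k * dVc2 C (a k)) ∧
    ((abar (k + 1) = a k ∧ bbar (k + 1) = b k) →
        a (k + 1) = a k ∧ b (k + 1) = b k ∧ γ (k + 1) = γ k) ∧
    (¬(abar (k + 1) = a k ∧ bbar (k + 1) = b k) →
        a (k + 1) = clamp (a k + η * dVr2 R (bbar (k + 1))) ∧
        b (k + 1) = clamp (b k + η * dVc2 C (a k)) ∧
        ((a (k + 1) = a k ∧ b (k + 1) = b k) →
            ∃ μ : ℝ, 0 < μ ∧ μ < 1 ∧ γ (k + 1) = μ * γ k) ∧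
        (¬(a (k + 1) = a k ∧ b (k + 1) = b k) → γ (k + 1) = γ k))

end

noncomputable section
namespace GSPP


lemma clamp_nonneg (x : ℝ) : 0 ≤ clamp x := le_max_left _ _

lemma clamp_le_one (x : ℝ) : clamp x ≤ 1 := by
  unfold clamp
  rcases le_total 1 x with h | h
  · simp [min_eq_left h]
  · rcases le_total 0 x with h0 | h0
    · rw [min_eq_right h]; exact max_le (by linarith) h
    · rw [max_eq_left]; norm_num; rw [min_eq_right h]; exact h0

lemma clamp_mem (x : ℝ) : clamp x ∈ Set.Icc (0:ℝ) 1 :=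
  Set.mem_Icc.mpr ⟨clamp_nonneg x, clamp_le_one x⟩

lemma clamp_of_mem {x : ℝ} (h : x ∈ Set.Icc (0:ℝ) 1) : clamp x = x := by
  obtain ⟨h1, h2⟩ := h
  unfold clamp; rw [min_eq_right h2, max_eq_right h1]

lemma clamp_mono {x y : ℝ} (h : x ≤ y) : clamp x ≤ clamp y :=
  max_le_max le_rfl (min_le_min le_rfl h)

lemma clamp_one_sub (x : ℝ) : clamp (1 - x) = 1 - clamp x := by
  unfold clamp
  rcases le_total 1 x with h | h <;> rcases le_total 0 x with h0 | h0 <;>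
    rcases le_total 1 (1-x) with h1 | h1 <;> rcases le_total 0 (1-x) with h2 | h2 <;>
    simp [min_def, max_def] <;> split_ifs <;> linarith

lemma clamp_eq_min {x : ℝ} (h : 0 ≤ x) : clamp x = min 1 x := by
  unfold clamp; rw [max_eq_right]; exact le_min (by norm_num) h

lemma clamp_eq_max {x : ℝ} (h : x ≤ 1) : clamp x = max 0 x := by
  unfold clamp; rw [min_eq_right h]

lemma clamp_of_nonpos {x : ℝ} (h : x ≤ 0) : clamp x = 0 := by
  rw [clamp_eq_max (by linarith : x ≤ 1), max_eq_left h]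

lemma clamp_fix_pos {x t : ℝ} (hx : x ∈ Set.Icc (0:ℝ) 1) (h : clamp (x + t) = x)
    (ht : 0 < t) : x = 1 := by
  by_contra hx1
  obtain ⟨h0, h1⟩ := hx
  have hlt : x < 1 := lt_of_le_of_ne h1 hx1
  have : min 1 (x + t) ≤ clamp (x + t) := le_max_right _ _
  rcases le_total (x + t) 1 with hc | hc
  · rw [min_eq_right hc] at this; linarith
  · rw [min_eq_left hc] at this; linarith

lemma clamp_fix_neg {x t : ℝ} (hx : x ∈ Set.Icc (0:ℝ) 1) (h : clamp (x + t) = x)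
    (ht : t < 0) : x = 0 := by
  by_contra hx0
  obtain ⟨h0, h1⟩ := hx
  have hgt : 0 < x := lt_of_le_of_ne h0 (Ne.symm hx0)
  have hle : clamp (x + t) ≤ max 0 (x + t) := by
    rw [clamp_eq_max (by linarith : x + t ≤ 1)]
  rcases le_total (x + t) 0 with hc | hc
  · rw [max_eq_left hc] at hle; linarith
  · rw [max_eq_right hc] at hle; linarith




section proj
variable {lo hi z w : ℝ}

lemma proj_le_self (hlo : lo ≤ z) : max lo (min hi z) ≤ z := by
  calc max lo (min hi z) ≤ max lo z := max_le_max le_rfl (min_le_right _ _)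
    _ = z := max_eq_right hlo

lemma self_le_proj (hhi : z ≤ hi) : z ≤ max lo (min hi z) :=
  le_trans (le_of_eq (min_eq_right hhi).symm) (le_max_right _ _)

lemma proj_le_of_lt (h : lo < max lo (min hi z)) : max lo (min hi z) ≤ z := by
  rcases max_cases lo (min hi z) with ⟨he, _⟩ | ⟨he, _⟩
  · rw [he] at h; exact absurd h (lt_irrefl _)
  · rw [he]; exact min_le_right _ _

lemma le_proj_of_lt (h : max lo (min hi z) < hi) : z ≤ max lo (min hi z) := by
  rcases min_cases hi z with ⟨he, _⟩ | ⟨he, _⟩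
  · rw [he] at h; exact absurd (le_max_right lo hi) (not_le.mpr h)
  · rw [he]; exact le_max_right _ _

lemma le_proj_of_le (hw : w ≤ hi) (h : w ≤ z) : w ≤ max lo (min hi z) :=
  le_trans (le_min hw h) (le_max_right _ _)

lemma proj_le_of_le (hw : lo ≤ w) (h : z ≤ w) : max lo (min hi z) ≤ w :=
  max_le hw (le_trans (min_le_right _ _) h)

end proj

/-- One-step contraction for the extragradient saddle dynamics in eigen-scaled
coordinates, in the strictly off-diagonal case `0 < p`, `q < 0`. -/
lemma step_contract {pmin pmax qmin qmax p q p' q' pb qb c d : ℝ}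
    (hpmin : pmin ≤ 0) (hqmax : 0 ≤ qmax)
    (hc0 : 0 < c) (hc1 : c ≤ 1) (hd0 : 0 ≤ d)
    (hp : pmin ≤ p ∧ p ≤ pmax) (hq : qmin ≤ q ∧ q ≤ qmax)
    (hpb : pb = max pmin (min pmax (p + d * q)))
    (hqb : qb = max qmin (min qmax (q + d * p)))
    (hp' : p' = max pmin (min pmax (p + c * qb)))
    (hq' : q' = max qmin (min qmax (q + c * pb)))
    (hppos : 0 < p) (hqneg : q < 0) (hpq' : p' * q' < 0) :
    |p'| + |q'| ≤ (1 - c * (1 - d)) * (|p| + |q|) := by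
  have hpbge : p + d * q ≤ pb := by
    rw [hpb]; exact self_le_proj (by nlinarith)
  have hqble : qb ≤ q + d * p := by
    rw [hqb]; exact proj_le_self (by nlinarith [hq.1])
  rcases lt_trichotomy p' 0 with hp'neg | hp'0 | hp'pos
  · -- p' < 0 ⇒ q' > 0 : impossible since c ≤ 1
    exfalso
    have hq'pos : 0 < q' := by nlinarith
    have h1 : p + c * qb ≤ p' := by
      rw [hp']; exact le_proj_of_lt (by rw [← hp']; linarith)
    have h2 : q' ≤ q + c * pb := by
      rw [hq']; exact proj_le_of_lt (by rw [← hq']; linarith)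
    have hqbge : q ≤ qb := by
      rw [hqb]; exact le_proj_of_le hq.2 (by nlinarith)
    have hpble : pb ≤ p := by
      rw [hpb]; exact proj_le_of_le hp.1 (by nlinarith)
    nlinarith [mul_le_mul_of_nonneg_left hqbge hc0.le,
      mul_le_mul_of_nonneg_left hpble hc0.le]
  · exfalso; rw [hp'0, zero_mul] at hpq'; exact lt_irrefl 0 hpq'
  · -- p' > 0 ⇒ q' < 0 : contraction
    have hq'neg : q' < 0 := by nlinarith
    have h1 : p' ≤ p + c * qb := by
      rw [hp']; exact proj_le_of_lt (by rw [← hp']; linarith)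
    have h2 : q + c * pb ≤ q' := by
      rw [hq']; exact le_proj_of_lt (by rw [← hq']; linarith)
    rw [abs_of_pos hp'pos, abs_of_neg hq'neg, abs_of_pos hppos, abs_of_neg hqneg]
    nlinarith [mul_le_mul_of_nonneg_left hqble hc0.le,
      mul_le_mul_of_nonneg_left hpbge hc0.le]


structure GP where
  ur : ℝ
  uc : ℝ
  br : ℝ
  bc : ℝ
  η : ℝ
  γ₀ : ℝ
  γ : ℕ → ℝ
  a : ℕ → ℝ
  b : ℕ → ℝ
  ab : ℕ → ℝ
  bb : ℕ → ℝ
  hur : 0 < ur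
  huc : 0 < uc
  hη : 0 < η
  hγ0 : 0 < γ₀
  hc : η * Real.sqrt (ur * uc) ≤ 1
  hd : γ₀ * Real.sqrt (ur * uc) < 1
  hγ : ∀ k, 0 < γ k ∧ γ k ≤ γ₀
  hbox : ∀ k, a k ∈ Set.Icc (0:ℝ) 1 ∧ b k ∈ Set.Icc (0:ℝ) 1
  hab : ∀ k, ab (k+1) = clamp (a k + γ k * (ur * b k + br))
  hbb : ∀ k, bb (k+1) = clamp (b k + γ k * (uc * a k + bc))
  hA : ∀ k, a (k+1) = clamp (a k + η * (ur * bb (k+1) + br))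
  hB : ∀ k, b (k+1) = clamp (b k + η * (uc * ab (k+1) + bc))

namespace GP

/-- The target conclusion: convergence to a "Nash-like" limit. -/
def Concl (P : GP) : Prop :=
  ∃ x y : ℝ, x ∈ Set.Icc (0:ℝ) 1 ∧ y ∈ Set.Icc (0:ℝ) 1 ∧
    Tendsto P.a atTop (nhds x) ∧ Tendsto P.b atTop (nhds y) ∧
    (0 < P.ur * y + P.br → x = 1) ∧ (P.ur * y + P.br < 0 → x = 0) ∧
    (0 < P.uc * x + P.bc → y = 1) ∧ (P.uc * x + P.bc < 0 → y = 0)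

/-- Swap the two players. -/
def swap (P : GP) : GP where
  ur := P.uc
  uc := P.ur
  br := P.bc
  bc := P.br
  η := P.η
  γ₀ := P.γ₀
  γ := P.γ
  a := P.b
  b := P.a
  ab := P.bb
  bb := P.ab
  hur := P.huc
  huc := P.hur
  hη := P.hη
  hγ0 := P.hγ0
  hc := by rw [mul_comm P.uc]; exact P.hc
  hd := by rw [mul_comm P.uc]; exact P.hd
  hγ := P.hγ
  hbox := fun k => ⟨(P.hbox k).2, (P.hbox k).1⟩
  hab := P.hbb
  hbb := P.hab
  hA := P.hB
  hB := P.hA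

lemma concl_of_swap (P : GP) (h : P.swap.Concl) : P.Concl := by
  obtain ⟨x, y, hx, hy, ta, tb, c1, c2, c3, c4⟩ := h
  exact ⟨y, x, hy, hx, tb, ta, c3, c4, c1, c2⟩

/-- Rotate the square by 180°: `a ↦ 1 - a`, `b ↦ 1 - b`. -/
def rot (P : GP) : GP where
  ur := P.ur
  uc := P.uc
  br := -P.ur - P.br
  bc := -P.uc - P.bc
  η := P.η
  γ₀ := P.γ₀
  γ := P.γ
  a := fun k => 1 - P.a k
  b := fun k => 1 - P.b k
  ab := fun k => 1 - P.ab k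
  bb := fun k => 1 - P.bb k
  hur := P.hur
  huc := P.huc
  hη := P.hη
  hγ0 := P.hγ0
  hc := P.hc
  hd := P.hd
  hγ := P.hγ
  hbox := fun k => by
    obtain ⟨⟨a1, a2⟩, ⟨b1, b2⟩⟩ := P.hbox k
    refine ⟨⟨?_, ?_⟩, ⟨?_, ?_⟩⟩ <;> linarith
  hab := fun k => by
    rw [show (1 - P.a k) + P.γ k * (P.ur * (1 - P.b k) + (-P.ur - P.br))
        = 1 - (P.a k + P.γ k * (P.ur * P.b k + P.br)) by ring,
      clamp_one_sub, ← P.hab k]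
  hbb := fun k => by
    rw [show (1 - P.b k) + P.γ k * (P.uc * (1 - P.a k) + (-P.uc - P.bc))
        = 1 - (P.b k + P.γ k * (P.uc * P.a k + P.bc)) by ring,
      clamp_one_sub, ← P.hbb k]
  hA := fun k => by
    rw [show (1 - P.a k) + P.η * (P.ur * (1 - P.bb (k+1)) + (-P.ur - P.br))
        = 1 - (P.a k + P.η * (P.ur * P.bb (k+1) + P.br)) by ring,
      clamp_one_sub, ← P.hA k]
  hB := fun k => by
    rw [show (1 - P.b k) + P.η * (P.uc * (1 - P.ab (k+1)) + (-P.uc - P.bc))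
        = 1 - (P.b k + P.η * (P.uc * P.ab (k+1) + P.bc)) by ring,
      clamp_one_sub, ← P.hB k]

lemma concl_of_rot (P : GP) (h : P.rot.Concl) : P.Concl := by
  obtain ⟨x, y, hx, hy, ta, tb, c1, c2, c3, c4⟩ := h
  simp only [rot] at ta tb c1 c2 c3 c4
  obtain ⟨hx1, hx2⟩ := hx
  obtain ⟨hy1, hy2⟩ := hy
  refine ⟨1 - x, 1 - y, ⟨by linarith, by linarith⟩, ⟨by linarith, by linarith⟩,
    ?_, ?_, ?_, ?_, ?_, ?_⟩
  · have := (tendsto_const_nhds (x := (1:ℝ)) (f := atTop)).sub ta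
    simpa using this
  · have := (tendsto_const_nhds (x := (1:ℝ)) (f := atTop)).sub tb
    simpa using this
  · intro h'
    have : P.ur * y + (-P.ur - P.br) < 0 := by linarith
    have := c2 this; linarith
  · intro h'
    have : 0 < P.ur * y + (-P.ur - P.br) := by linarith
    have := c1 this; linarith
  · intro h'
    have : P.uc * x + (-P.uc - P.bc) < 0 := by nlinarith
    have := c4 this; linarith
  · intro h'
    have : 0 < P.uc * x + (-P.uc - P.bc) := by nlinarith
    have := c3 this; linarith



lemma bb_ge (P : GP) (k : ℕ) (hg : 0 ≤ P.uc * P.a k + P.bc) :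
    P.b k ≤ P.bb (k+1) := by
  rw [P.hbb k]
  calc P.b k = clamp (P.b k) := (clamp_of_mem (P.hbox k).2).symm
    _ ≤ clamp (P.b k + P.γ k * (P.uc * P.a k + P.bc)) :=
        clamp_mono (by nlinarith [(P.hγ k).1])

lemma ab_ge (P : GP) (k : ℕ) (hf : 0 ≤ P.ur * P.b k + P.br) :
    P.a k ≤ P.ab (k+1) := by
  rw [P.hab k]
  calc P.a k = clamp (P.a k) := (clamp_of_mem (P.hbox k).1).symm
    _ ≤ clamp (P.a k + P.γ k * (P.ur * P.b k + P.br)) :=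
        clamp_mono (by nlinarith [(P.hγ k).1])

lemma mono_step (P : GP) (k : ℕ) (hf : 0 ≤ P.ur * P.b k + P.br)
    (hg : 0 ≤ P.uc * P.a k + P.bc) :
    P.a k ≤ P.a (k+1) ∧ P.b k ≤ P.b (k+1) ∧
      0 ≤ P.ur * P.b (k+1) + P.br ∧ 0 ≤ P.uc * P.a (k+1) + P.bc := by
  have hbb := P.bb_ge k hg
  have hab := P.ab_ge k hf
  have hfb : 0 ≤ P.ur * P.bb (k+1) + P.br := by nlinarith [P.hur]
  have hga : 0 ≤ P.uc * P.ab (k+1) + P.bc := by nlinarith [P.huc]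
  have ha : P.a k ≤ P.a (k+1) := by
    rw [P.hA k]
    calc P.a k = clamp (P.a k) := (clamp_of_mem (P.hbox k).1).symm
      _ ≤ _ := clamp_mono (by nlinarith [P.hη])
  have hb : P.b k ≤ P.b (k+1) := by
    rw [P.hB k]
    calc P.b k = clamp (P.b k) := (clamp_of_mem (P.hbox k).2).symm
      _ ≤ _ := clamp_mono (by nlinarith [P.hη])
  exact ⟨ha, hb, by nlinarith [P.hur], by nlinarith [P.huc]⟩

/-- Monotone (coordination) case: from a time `K` where both gradients are
nonnegative, both strategies converge monotonically; row-player's limit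
conditions. -/
lemma mono_half (P : GP) (K : ℕ) (hf : 0 ≤ P.ur * P.b K + P.br)
    (hg : 0 ≤ P.uc * P.a K + P.bc) :
    ∃ x y : ℝ, x ∈ Set.Icc (0:ℝ) 1 ∧ y ∈ Set.Icc (0:ℝ) 1 ∧
      Tendsto P.a atTop (nhds x) ∧ Tendsto P.b atTop (nhds y) ∧
      (0 < P.ur * y + P.br → x = 1) ∧ (P.ur * y + P.br < 0 → x = 0) := by
  have key : ∀ j, 0 ≤ P.ur * P.b (K+j) + P.br ∧ 0 ≤ P.uc * P.a (K+j) + P.bc := by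
    intro j
    induction j with
    | zero => exact ⟨hf, hg⟩
    | succ n ih =>
        have h := P.mono_step (K+n) ih.1 ih.2
        exact ⟨by rw [Nat.add_succ]; exact h.2.2.1, by rw [Nat.add_succ]; exact h.2.2.2⟩
  have mono_a : Monotone fun j => P.a (K+j) := by
    apply monotone_nat_of_le_succ
    intro n
    have h := P.mono_step (K+n) (key n).1 (key n).2
    rw [Nat.add_succ]; exact h.1
  have mono_b : Monotone fun j => P.b (K+j) := by
    apply monotone_nat_of_le_succ
    intro n
    have h := P.mono_step (K+n) (key n).1 (key n).2
    rw [Nat.add_succ]; exact h.2.1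
  have bddA : BddAbove (Set.range fun j => P.a (K+j)) := by
    refine ⟨1, ?_⟩; rintro _ ⟨j, rfl⟩; exact (P.hbox (K+j)).1.2
  have bddB : BddAbove (Set.range fun j => P.b (K+j)) := by
    refine ⟨1, ?_⟩; rintro _ ⟨j, rfl⟩; exact (P.hbox (K+j)).2.2
  set x := ⨆ j, P.a (K+j) with hxdef
  set y := ⨆ j, P.b (K+j) with hydef
  have ta' : Tendsto (fun j => P.a (K+j)) atTop (nhds x) :=
    tendsto_atTop_ciSup mono_a bddA
  have tb' : Tendsto (fun j => P.b (K+j)) atTop (nhds y) :=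
    tendsto_atTop_ciSup mono_b bddB
  have hshift : ∀ f : ℕ → ℝ, (fun n => f (n + K)) = fun j => f (K + j) := by
    intro f; funext n; rw [Nat.add_comm]
  have ta : Tendsto P.a atTop (nhds x) := by
    rw [← Filter.tendsto_add_atTop_iff_nat K, hshift]; exact ta'
  have tb : Tendsto P.b atTop (nhds y) := by
    rw [← Filter.tendsto_add_atTop_iff_nat K, hshift]; exact tb'
  have hx : x ∈ Set.Icc (0:ℝ) 1 :=
    ⟨ge_of_tendsto' ta fun k => (P.hbox k).1.1, le_of_tendsto' ta fun k => (P.hbox k).1.2⟩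
  have hy : y ∈ Set.Icc (0:ℝ) 1 :=
    ⟨ge_of_tendsto' tb fun k => (P.hbox k).2.1, le_of_tendsto' tb fun k => (P.hbox k).2.2⟩
  have tfb : Tendsto (fun k => P.ur * P.b k + P.br) atTop (nhds (P.ur * y + P.br)) :=
    (tb.const_mul _).add_const _
  have hfy : 0 ≤ P.ur * y + P.br := by
    apply ge_of_tendsto tfb
    filter_upwards [eventually_ge_atTop K] with k hk
    obtain ⟨j, rfl⟩ := Nat.exists_eq_add_of_le hk
    exact (key j).1
  refine ⟨x, y, hx, hy, ta, tb, ?_, fun h => absurd h (not_lt.mpr hfy)⟩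
  intro hpos
  by_contra hx1
  have hxlt : x < 1 := lt_of_le_of_ne hx.2 hx1
  have akx : ∀ j, P.a (K + j) ≤ x := fun j => le_ciSup bddA j
  have hex : ∃ j₀, 0 < P.ur * P.b (K + j₀) + P.br := by
    by_contra hno
    push_neg at hno
    have : P.ur * y + P.br ≤ 0 := by
      apply le_of_tendsto tfb
      filter_upwards [eventually_ge_atTop K] with k hk
      obtain ⟨j, rfl⟩ := Nat.exists_eq_add_of_le hk
      exact hno j
    linarith
  obtain ⟨j₀, hj₀⟩ := hex
  set ε := P.η * (P.ur * P.b (K + j₀) + P.br) with hε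
  have hε0 : 0 < ε := mul_pos P.hη hj₀
  have step' : ∀ j, j₀ ≤ j → P.a (K+j) + ε ≤ P.a (K+j+1) := by
    intro j hj
    have hbmono : P.b (K+j₀) ≤ P.b (K+j) := mono_b hj
    have h1 : P.b (K+j) ≤ P.bb (K+j+1) := P.bb_ge _ (key j).2
    have hfbb : ε ≤ P.η * (P.ur * P.bb (K+j+1) + P.br) := by
      rw [hε]
      have hprod := mul_le_mul_of_nonneg_left (le_trans hbmono h1)
        (mul_pos P.hη P.hur).le
      nlinarith [hprod]
    have harg : 0 ≤ P.a (K+j) + P.η * (P.ur * P.bb (K+j+1) + P.br) := by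
      nlinarith [(P.hbox (K+j)).1.1]
    have heq := P.hA (K+j)
    rw [clamp_eq_min harg] at heq
    rcases le_total 1 (P.a (K+j) + P.η * (P.ur * P.bb (K+j+1) + P.br)) with h | h
    · exfalso
      have h1' : P.a (K+j+1) = 1 := by rw [heq, min_eq_left h]
      have := akx (j+1)
      rw [Nat.add_succ] at this
      rw [h1'] at this
      linarith
    · rw [heq, min_eq_right h]; linarith
  have grow : ∀ m : ℕ, P.a (K+j₀) + m * ε ≤ P.a (K + j₀ + m) := by
    intro m
    induction m with
    | zero => simp
    | succ n ih =>
        have h := step' (j₀ + n) (Nat.le_add_right _ _)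
        rw [show K + (j₀ + n) = K + j₀ + n from by omega,
          show K + j₀ + n + 1 = K + j₀ + (n + 1) from by omega] at h
        push_cast
        push_cast at ih
        linarith [ih, h]
  obtain ⟨m, hm⟩ := exists_nat_gt (1 / ε)
  have hmε : 1 < m * ε := by
    rw [div_lt_iff₀ hε0] at hm
    linarith
  have := grow m
  have hle := (P.hbox (K + j₀ + m)).1.2
  have hge := (P.hbox (K + j₀)).1.1
  linarith

lemma mono_case (P : GP) (K : ℕ) (hf : 0 ≤ P.ur * P.b K + P.br)
    (hg : 0 ≤ P.uc * P.a K + P.bc) : P.Concl := by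
  obtain ⟨x, y, hx, hy, ta, tb, c1, c2⟩ := P.mono_half K hf hg
  obtain ⟨y', x', hy', hx', tb', ta', c3, c4⟩ := P.swap.mono_half K hg hf
  have hxx : x = x' := tendsto_nhds_unique ta ta'
  have hyy : y = y' := tendsto_nhds_unique tb tb'
  subst hxx hyy
  exact ⟨x, y, hx, hy, ta, tb, c1, c2, c3, c4⟩


end GP
lemma scale_clamp {σ : ℝ} (hσ : 0 ≤ σ) (z t : ℝ) :
    σ * (clamp z - t) = max (σ*(0-t)) (min (σ*(1-t)) (σ*(z-t))) := by
  unfold clamp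
  rw [← max_sub_sub_right, ← min_sub_sub_right,
    mul_max_of_nonneg _ _ hσ, mul_min_of_nonneg _ _ hσ]

namespace GP

set_option maxHeartbeats 1600000 in
/-- Off-diagonal contraction case: both thresholds lie in `[0,1]`; the
trajectory contracts geometrically to the interior fixed point. -/
lemma contract (P : GP)
    (hOff : ∀ k, (P.ur * P.b k + P.br) * (P.uc * P.a k + P.bc) < 0)
    (h1 : P.br ≤ 0) (h2 : 0 ≤ P.ur + P.br)
    (h3 : P.bc ≤ 0) (h4 : 0 ≤ P.uc + P.bc) : P.Concl := by
  have hur := P.hur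
  have huc := P.huc
  set σr := Real.sqrt P.ur with hσrdef
  set σc := Real.sqrt P.uc with hσcdef
  have hσr : 0 < σr := Real.sqrt_pos.mpr P.hur
  have hσc : 0 < σc := Real.sqrt_pos.mpr P.huc
  have hr2 : σr * σr = P.ur := Real.mul_self_sqrt P.hur.le
  have hc2 : σc * σc = P.uc := Real.mul_self_sqrt P.huc.le
  have hs : Real.sqrt (P.ur * P.uc) = σr * σc := Real.sqrt_mul P.hur.le _
  set αs := -P.bc / P.uc with hαs
  set βs := -P.br / P.ur with hβs
  have hαs0 : 0 ≤ αs := div_nonneg (by linarith) P.huc.le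
  have hαs1 : αs ≤ 1 := by rw [hαs, div_le_one P.huc]; linarith
  have hβs0 : 0 ≤ βs := div_nonneg (by linarith) P.hur.le
  have hβs1 : βs ≤ 1 := by rw [hβs, div_le_one P.hur]; linarith
  have hfq : ∀ z, P.ur * (z - βs) = P.ur * z + P.br := by
    intro z; rw [hβs]; field_simp; ring
  have hgp : ∀ z, P.uc * (z - αs) = P.uc * z + P.bc := by
    intro z; rw [hαs]; field_simp; ring
  set c := P.η * (σr * σc) with hcdef
  have hc0 : 0 < c := mul_pos P.hη (mul_pos hσr hσc)
  have hc1 : c ≤ 1 := by rw [hcdef, ← hs]; exact P.hc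
  set d0 := P.γ₀ * (σr * σc) with hd0def
  have hd00 : 0 ≤ d0 := (mul_pos P.hγ0 (mul_pos hσr hσc)).le
  have hd01 : d0 < 1 := by rw [hd0def, ← hs]; exact P.hd
  set p : ℕ → ℝ := fun k => σc * (P.a k - αs) with hpdef
  set q : ℕ → ℝ := fun k => σr * (P.b k - βs) with hqdef
  set pbb : ℕ → ℝ := fun k => σc * (P.ab k - αs) with hpbdef
  set qbb : ℕ → ℝ := fun k => σr * (P.bb k - βs) with hqbdef
  set pmin := σc * (0 - αs) with hpmindef
  set pmax := σc * (1 - αs) with hpmaxdef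
  set qmin := σr * (0 - βs) with hqmindef
  set qmax := σr * (1 - βs) with hqmaxdef
  have hpmin0 : pmin ≤ 0 := by
    rw [hpmindef]; nlinarith [mul_nonneg hσc.le hαs0]
  have hpmax0 : 0 ≤ pmax := by
    rw [hpmaxdef]; exact mul_nonneg hσc.le (by linarith)
  have hqmin0 : qmin ≤ 0 := by
    rw [hqmindef]; nlinarith [mul_nonneg hσr.le hβs0]
  have hqmax0 : 0 ≤ qmax := by
    rw [hqmaxdef]; exact mul_nonneg hσr.le (by linarith)
  have hpmem : ∀ k, pmin ≤ p k ∧ p k ≤ pmax := by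
    intro k
    obtain ⟨ha0, ha1⟩ := (P.hbox k).1
    exact ⟨mul_le_mul_of_nonneg_left (by linarith) hσc.le,
      mul_le_mul_of_nonneg_left (by linarith) hσc.le⟩
  have hqmem : ∀ k, qmin ≤ q k ∧ q k ≤ qmax := by
    intro k
    obtain ⟨hb0, hb1⟩ := (P.hbox k).2
    exact ⟨mul_le_mul_of_nonneg_left (by linarith) hσr.le,
      mul_le_mul_of_nonneg_left (by linarith) hσr.le⟩
  -- update formulas in scaled coordinates
  have hcq : ∀ z, c * (σr * (z - βs)) = P.η * σc * (P.ur * z + P.br) := by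
    intro z
    calc c * (σr * (z - βs)) = P.η * σc * (σr * σr * (z - βs)) := by
          rw [hcdef]; ring
      _ = P.η * σc * (P.ur * (z - βs)) := by rw [hr2]
      _ = P.η * σc * (P.ur * z + P.br) := by rw [hfq]
  have hcp : ∀ z, c * (σc * (z - αs)) = P.η * σr * (P.uc * z + P.bc) := by
    intro z
    calc c * (σc * (z - αs)) = P.η * σr * (σc * σc * (z - αs)) := by
          rw [hcdef]; ring
      _ = P.η * σr * (P.uc * (z - αs)) := by rw [hc2]
      _ = P.η * σr * (P.uc * z + P.bc) := by rw [hgp]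
  have hdq : ∀ k z, (P.γ k * (σr * σc)) * (σr * (z - βs))
      = P.γ k * σc * (P.ur * z + P.br) := by
    intro k z
    calc (P.γ k * (σr * σc)) * (σr * (z - βs))
        = P.γ k * σc * (σr * σr * (z - βs)) := by ring
      _ = P.γ k * σc * (P.ur * (z - βs)) := by rw [hr2]
      _ = P.γ k * σc * (P.ur * z + P.br) := by rw [hfq]
  have hdp : ∀ k z, (P.γ k * (σr * σc)) * (σc * (z - αs))
      = P.γ k * σr * (P.uc * z + P.bc) := by
    intro k z
    calc (P.γ k * (σr * σc)) * (σc * (z - αs))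
        = P.γ k * σr * (σc * σc * (z - αs)) := by ring
      _ = P.γ k * σr * (P.uc * (z - αs)) := by rw [hc2]
      _ = P.γ k * σr * (P.uc * z + P.bc) := by rw [hgp]
  have hp' : ∀ k, p (k+1) = max pmin (min pmax (p k + c * qbb (k+1))) := by
    intro k
    have e1 : σc * ((P.a k + P.η * (P.ur * P.bb (k+1) + P.br)) - αs)
        = p k + c * qbb (k+1) := by
      rw [hpdef, hqbdef]
      simp only []
      rw [hcq (P.bb (k+1))]
      ring
    calc p (k+1) = σc * (clamp (P.a k + P.η * (P.ur * P.bb (k+1) + P.br)) - αs) := by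
          rw [hpdef]; simp only []; rw [P.hA k]
      _ = max pmin (min pmax (σc * ((P.a k + P.η * (P.ur * P.bb (k+1) + P.br)) - αs))) :=
          scale_clamp hσc.le _ _
      _ = max pmin (min pmax (p k + c * qbb (k+1))) := by rw [e1]
  have hq' : ∀ k, q (k+1) = max qmin (min qmax (q k + c * pbb (k+1))) := by
    intro k
    have e1 : σr * ((P.b k + P.η * (P.uc * P.ab (k+1) + P.bc)) - βs)
        = q k + c * pbb (k+1) := by
      rw [hqdef, hpbdef]
      simp only []
      rw [hcp (P.ab (k+1))]
      ring
    calc q (k+1) = σr * (clamp (P.b k + P.η * (P.uc * P.ab (k+1) + P.bc)) - βs) := by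
          rw [hqdef]; simp only []; rw [P.hB k]
      _ = max qmin (min qmax (σr * ((P.b k + P.η * (P.uc * P.ab (k+1) + P.bc)) - βs))) :=
          scale_clamp hσr.le _ _
      _ = max qmin (min qmax (q k + c * pbb (k+1))) := by rw [e1]
  have hpb' : ∀ k, pbb (k+1) = max pmin (min pmax (p k + (P.γ k * (σr * σc)) * q k)) := by
    intro k
    have e1 : σc * ((P.a k + P.γ k * (P.ur * P.b k + P.br)) - αs)
        = p k + (P.γ k * (σr * σc)) * q k := by
      rw [hpdef, hqdef]
      simp only []
      rw [hdq k (P.b k)]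
      ring
    calc pbb (k+1) = σc * (clamp (P.a k + P.γ k * (P.ur * P.b k + P.br)) - αs) := by
          rw [hpbdef]; simp only []; rw [P.hab k]
      _ = max pmin (min pmax (σc * ((P.a k + P.γ k * (P.ur * P.b k + P.br)) - αs))) :=
          scale_clamp hσc.le _ _
      _ = _ := by rw [e1]
  have hqb' : ∀ k, qbb (k+1) = max qmin (min qmax (q k + (P.γ k * (σr * σc)) * p k)) := by
    intro k
    have e1 : σr * ((P.b k + P.γ k * (P.uc * P.a k + P.bc)) - βs)
        = q k + (P.γ k * (σr * σc)) * p k := by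
      rw [hqdef, hpdef]
      simp only []
      rw [hdp k (P.a k)]
      ring
    calc qbb (k+1) = σr * (clamp (P.b k + P.γ k * (P.uc * P.a k + P.bc)) - βs) := by
          rw [hqbdef]; simp only []; rw [P.hbb k]
      _ = max qmin (min qmax (σr * ((P.b k + P.γ k * (P.uc * P.a k + P.bc)) - βs))) :=
          scale_clamp hσr.le _ _
      _ = _ := by rw [e1]
  -- off-diagonal in scaled coordinates
  have hOffpq : ∀ k, p k * q k < 0 := by
    intro k
    have e : (P.ur * P.b k + P.br) * (P.uc * P.a k + P.bc)
        = (σr * σc) * (p k * q k) := by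
      calc (P.ur * P.b k + P.br) * (P.uc * P.a k + P.bc)
          = (P.ur * (P.b k - βs)) * (P.uc * (P.a k - αs)) := by
            rw [hfq (P.b k), hgp (P.a k)]
        _ = (σr * σr * (P.b k - βs)) * (σc * σc * (P.a k - αs)) := by
            rw [hr2, hc2]
        _ = (σr * σc) * (p k * q k) := by
            simp only [hpdef, hqdef]; ring
    have h := hOff k
    rw [e] at h
    by_contra hcon
    push_neg at hcon
    nlinarith [mul_pos hσr hσc]
  -- one-step contraction
  set ρ := 1 - c * (1 - d0) with hρdef
  set W : ℕ → ℝ := fun k => |p k| + |q k| with hWdef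
  have hWn : ∀ k, 0 ≤ W k := fun k => add_nonneg (abs_nonneg _) (abs_nonneg _)
  have hstep : ∀ k, W (k+1) ≤ ρ * W k := by
    intro k
    have hdk0 : 0 ≤ P.γ k * (σr * σc) := (mul_pos (P.hγ k).1 (mul_pos hσr hσc)).le
    have hdkd0 : P.γ k * (σr * σc) ≤ d0 := by
      rw [hd0def]
      exact mul_le_mul_of_nonneg_right (P.hγ k).2 (mul_pos hσr hσc).le
    rcases lt_trichotomy (p k) 0 with hpneg | hp0 | hppos
    · have hqpos : 0 < q k := by nlinarith [hOffpq k]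
      have hsc := step_contract hqmin0 hpmax0 hc0 hc1 hdk0 (hqmem k) (hpmem k)
        (hqb' k) (hpb' k) (hq' k) (hp' k) hqpos hpneg
        (by rw [mul_comm]; exact hOffpq (k+1))
      rw [hWdef]
      simp only []
      rw [hρdef]
      nlinarith [mul_le_mul_of_nonneg_left hdkd0 hc0.le, abs_nonneg (p k),
        abs_nonneg (q k), hsc]
    · exfalso; have := hOffpq k; rw [hp0, zero_mul] at this; exact lt_irrefl 0 this
    · have hqneg : q k < 0 := by nlinarith [hOffpq k]
      have hsc := step_contract hpmin0 hqmax0 hc0 hc1 hdk0 (hpmem k) (hqmem k)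
        (hpb' k) (hqb' k) (hp' k) (hq' k) hppos hqneg (hOffpq (k+1))
      rw [hWdef]
      simp only []
      rw [hρdef]
      nlinarith [mul_le_mul_of_nonneg_left hdkd0 hc0.le, abs_nonneg (p k),
        abs_nonneg (q k), hsc]
  have hρ0 : 0 ≤ ρ := by rw [hρdef]; nlinarith
  have hρ1 : ρ < 1 := by rw [hρdef]; nlinarith
  have hgeo : ∀ k, W k ≤ W 0 * ρ ^ k := by
    intro k
    induction k with
    | zero => simp
    | succ n ih =>
        calc W (n+1) ≤ ρ * W n := hstep n
          _ ≤ ρ * (W 0 * ρ ^ n) := mul_le_mul_of_nonneg_left ih hρ0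
          _ = W 0 * ρ ^ (n+1) := by ring
  have hWlim : Tendsto W atTop (nhds 0) := by
    apply squeeze_zero hWn hgeo
    have := (tendsto_pow_atTop_nhds_zero_of_lt_one hρ0 hρ1).const_mul (W 0)
    simpa using this
  have hplim : Tendsto p atTop (nhds 0) := by
    apply tendsto_of_tendsto_of_tendsto_of_le_of_le (by simpa using hWlim.neg) hWlim
    · intro k
      have h1 := neg_abs_le (p k)
      have h2 := abs_nonneg (q k)
      simp only [hWdef]
      linarith
    · intro k
      have h1 := le_abs_self (p k)
      have h2 := abs_nonneg (q k)
      simp only [hWdef]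
      linarith
  have hqlim : Tendsto q atTop (nhds 0) := by
    apply tendsto_of_tendsto_of_tendsto_of_le_of_le (by simpa using hWlim.neg) hWlim
    · intro k
      have h1 := neg_abs_le (q k)
      have h2 := abs_nonneg (p k)
      simp only [hWdef]
      linarith
    · intro k
      have h1 := le_abs_self (q k)
      have h2 := abs_nonneg (p k)
      simp only [hWdef]
      linarith
  have ta : Tendsto P.a atTop (nhds αs) := by
    have h := hplim.mul_const (1/σc)
    have h' := h.const_add αs
    have heq : (fun k => αs + p k * (1/σc)) = P.a := by
      funext k
      simp only [hpdef]
      field_simp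
      ring
    rw [← heq]
    simpa using h'
  have tb : Tendsto P.b atTop (nhds βs) := by
    have h := hqlim.mul_const (1/σr)
    have h' := h.const_add βs
    have heq : (fun k => βs + q k * (1/σr)) = P.b := by
      funext k
      simp only [hqdef]
      field_simp
      ring
    rw [← heq]
    simpa using h'
  have hf0 : P.ur * βs + P.br = 0 := by rw [hβs]; field_simp; ring
  have hg0 : P.uc * αs + P.bc = 0 := by rw [hαs]; field_simp; ring
  refine ⟨αs, βs, ⟨hαs0, hαs1⟩, ⟨hβs0, hβs1⟩, ta, tb, ?_, ?_, ?_, ?_⟩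
  · intro h; rw [hf0] at h; exact absurd h (lt_irrefl 0)
  · intro h; rw [hf0] at h; exact absurd h (lt_irrefl 0)
  · intro h; rw [hg0] at h; exact absurd h (lt_irrefl 0)
  · intro h; rw [hg0] at h; exact absurd h (lt_irrefl 0)

/-- Boundary case: the column player's threshold is negative (`bc > 0`),
while the trajectory stays strictly off-diagonal. -/
lemma bcase (P : GP)
    (hOff : ∀ k, (P.ur * P.b k + P.br) * (P.uc * P.a k + P.bc) < 0)
    (hbc : 0 < P.bc) : P.Concl := by
  have hg : ∀ k, 0 < P.uc * P.a k + P.bc := by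
    intro k
    nlinarith [(P.hbox k).1.1, P.huc]
  have hf : ∀ k, P.ur * P.b k + P.br < 0 := by
    intro k
    nlinarith [hOff k, hg k]
  rcases le_or_gt 0 (P.ur + P.br) with h1 | h1
  · -- f(1) ≥ 0 : the column strategy would escape upward; impossible
    exfalso
    have hstep : ∀ k, P.b k + P.η * P.bc ≤ P.b (k+1) := by
      intro k
      have habox : 0 ≤ P.ab (k+1) := by rw [P.hab k]; exact (clamp_mem _).1
      have hga : P.bc ≤ P.uc * P.ab (k+1) + P.bc := by nlinarith [P.huc]
      have harg0 : 0 ≤ P.b k + P.η * (P.uc * P.ab (k+1) + P.bc) := by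
        nlinarith [(P.hbox k).2.1, P.hη]
      have hb1 : P.b (k+1) = min 1 (P.b k + P.η * (P.uc * P.ab (k+1) + P.bc)) := by
        rw [P.hB k, clamp_eq_min harg0]
      rcases le_total 1 (P.b k + P.η * (P.uc * P.ab (k+1) + P.bc)) with h | h
      · exfalso
        have hb2 : P.b (k+1) = 1 := by rw [hb1, min_eq_left h]
        have := hf (k+1)
        rw [hb2, mul_one] at this
        linarith
      · rw [hb1, min_eq_right h]
        nlinarith [P.hη]
    have grow : ∀ k : ℕ, P.b 0 + k * (P.η * P.bc) ≤ P.b k := by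
      intro k
      induction k with
      | zero => simp
      | succ n ih =>
          have := hstep n
          push_cast
          push_cast at ih
          linarith
    have hεb : 0 < P.η * P.bc := mul_pos P.hη hbc
    obtain ⟨m, hm⟩ := exists_nat_gt (1 / (P.η * P.bc))
    have hm1 : 1 < m * (P.η * P.bc) := by
      rw [div_lt_iff₀ hεb] at hm
      linarith
    have := grow m
    linarith [(P.hbox m).2.2, (P.hbox 0).2.1]
  · -- f(1) < 0 : `a` is absorbed at 0, then `b` is absorbed at 1
    set e := -(P.η * (P.ur + P.br)) with he
    have he0 : 0 < e := by
      rw [he]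
      nlinarith [P.hη]
    have hstepa : ∀ k, P.a (k+1) ≤ max 0 (P.a k - e) := by
      intro k
      have hbbmem : P.bb (k+1) ≤ 1 := by rw [P.hbb k]; exact (clamp_mem _).2
      have harg : P.a k + P.η * (P.ur * P.bb (k+1) + P.br) ≤ P.a k - e := by
        rw [he]
        nlinarith [mul_le_mul_of_nonneg_left hbbmem (mul_pos P.hη P.hur).le]
      have harg1 : P.a k + P.η * (P.ur * P.bb (k+1) + P.br) ≤ 1 :=
        le_trans harg (by linarith [(P.hbox k).1.2, he0])
      rw [P.hA k, clamp_eq_max harg1]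
      exact max_le_max le_rfl harg
    have hzero : ∃ K, P.a K = 0 := by
      by_contra hno
      push_neg at hno
      have hpos : ∀ k, 0 < P.a k := fun k =>
        lt_of_le_of_ne (P.hbox k).1.1 (Ne.symm (hno k))
      have hdec : ∀ k, P.a (k+1) ≤ P.a k - e := by
        intro k
        have h := hstepa k
        rcases le_total (P.a k - e) 0 with hc | hc
        · exfalso
          rw [max_eq_left hc] at h
          linarith [hpos (k+1)]
        · rwa [max_eq_right hc] at h
      have hdown : ∀ k : ℕ, P.a k ≤ P.a 0 - k * e := by
        intro k
        induction k with
       | zero => simp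
        | succ n ih =>
            have := hdec n
            push_cast
            push_cast at ih
            linarith
      obtain ⟨m, hm⟩ := exists_nat_gt (1 / e)
      have hm1 : 1 < m * e := by
        rw [div_lt_iff₀ he0] at hm
        linarith
      have := hdown m
      linarith [(P.hbox m).1.1, (P.hbox 0).1.2]
    obtain ⟨K, hK⟩ := hzero
    have hzero' : ∀ j, P.a (K+j) = 0 := by
      intro j
      induction j with
      | zero => exact hK
      | succ n ih =>
          have h := hstepa (K+n)
          rw [Nat.add_succ]
          rw [ih] at h
          have h2 : max 0 (0 - e) = 0 := max_eq_left (by linarith)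
          rw [h2] at h
          exact le_antisymm h (P.hbox (K+n+1)).1.1
    have habz : ∀ j, P.ab (K+j+1) = 0 := by
      intro j
      rw [P.hab (K+j), hzero' j]
      apply clamp_of_nonpos
      nlinarith [(P.hγ (K+j)).1, hf (K+j)]
    have hbstep : ∀ j, P.b (K+j+1) = min 1 (P.b (K+j) + P.η * P.bc) := by
      intro j
      rw [P.hB (K+j), habz j]
      rw [show P.uc * 0 + P.bc = P.bc by ring]
      exact clamp_eq_min (by nlinarith [(P.hbox (K+j)).2.1, P.hη])
    have hone : ∃ j, P.b (K+j) = 1 := by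
      by_contra hno
      push_neg at hno
      have hbgrow : ∀ j, P.b (K+j+1) = P.b (K+j) + P.η * P.bc := by
        intro j
        rcases le_total 1 (P.b (K+j) + P.η * P.bc) with h | h
        · exfalso
          have := hbstep j
          rw [min_eq_left h] at this
          exact hno (j+1) (by rw [Nat.add_succ]; exact this)
        · rw [hbstep j, min_eq_right h]
      have hgrow2 : ∀ j : ℕ, P.b K + j * (P.η * P.bc) ≤ P.b (K+j) := by
        intro j
        induction j with
        | zero => simp
        | succ n ih =>
            calc P.b K + (↑(n+1) : ℝ) * (P.η * P.bc)
                = (P.b K + ↑n * (P.η * P.bc)) + P.η * P.bc := by push_cast; ring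
              _ ≤ P.b (K+n) + P.η * P.bc := by linarith
              _ = P.b (K+n+1) := (hbgrow n).symm
      have hεb : 0 < P.η * P.bc := mul_pos P.hη hbc
      obtain ⟨m, hm⟩ := exists_nat_gt (1 / (P.η * P.bc))
      have hm1 : 1 < m * (P.η * P.bc) := by
        rw [div_lt_iff₀ hεb] at hm
        linarith
      have := hgrow2 m
      linarith [(P.hbox (K+m)).2.2, (P.hbox K).2.1]
    obtain ⟨j₁, hj₁⟩ := hone
    have hone' : ∀ j, P.b (K+j₁+j) = 1 := by
      intro j
      induction j with
      | zero => exact hj₁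
      | succ n ih =>
          have := hbstep (j₁+n)
          rw [← Nat.add_assoc] at this
          rw [ih] at this
          rw [Nat.add_succ, this]
          exact min_eq_left (by nlinarith [mul_pos P.hη hbc])
    refine ⟨0, 1, by norm_num, by norm_num, ?_, ?_, ?_, ?_, ?_, ?_⟩
    · apply Tendsto.congr' _ tendsto_const_nhds
      filter_upwards [eventually_ge_atTop K] with k hk
      obtain ⟨j, rfl⟩ := Nat.exists_eq_add_of_le hk
      exact (hzero' j).symm
    · apply Tendsto.congr' _ tendsto_const_nhds
      filter_upwards [eventually_ge_atTop (K+j₁)] with k hk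
      obtain ⟨j, rfl⟩ := Nat.exists_eq_add_of_le hk
      exact (hone' j).symm
    · intro h; exfalso; rw [mul_one] at h; linarith
    · intro _; rfl
    · intro _; rfl
    · intro h; exfalso; rw [mul_zero, zero_add] at h; linarith

/-- Main abstract convergence result for a non-terminating GA-SPP run with
`u_r, u_c > 0`. -/
theorem concl (P : GP) : P.Concl := by
  by_cases hup : ∃ K, 0 ≤ P.ur * P.b K + P.br ∧ 0 ≤ P.uc * P.a K + P.bc
  · obtain ⟨K, h1, h2⟩ := hup
    exact P.mono_case K h1 h2
  by_cases hdn : ∃ K, P.ur * P.b K + P.br ≤ 0 ∧ P.uc * P.a K + P.bc ≤ 0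
  · obtain ⟨K, h1, h2⟩ := hdn
    apply P.concl_of_rot
    apply P.rot.mono_case K
    · show (0:ℝ) ≤ P.ur * (1 - P.b K) + (-P.ur - P.br)
      linarith
    · show (0:ℝ) ≤ P.uc * (1 - P.a K) + (-P.uc - P.bc)
      linarith
  push_neg at hup hdn
  have hOff : ∀ k, (P.ur * P.b k + P.br) * (P.uc * P.a k + P.bc) < 0 := by
    intro k
    rcases lt_trichotomy (P.ur * P.b k + P.br) 0 with h | h | h
    · have hg := hdn k h.le
      exact mul_neg_of_neg_of_pos h hg
    · exfalso
      have hg1 := hup k h.ge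
      have hg2 := hdn k h.le
      linarith
    · have hg := hup k h.le
      exact mul_neg_of_pos_of_neg h hg
  by_cases hint : P.br ≤ 0 ∧ 0 ≤ P.ur + P.br ∧ P.bc ≤ 0 ∧ 0 ≤ P.uc + P.bc
  · exact P.contract hOff hint.1 hint.2.1 hint.2.2.1 hint.2.2.2
  have hOffswap : ∀ k, (P.uc * P.a k + P.bc) * (P.ur * P.b k + P.br) < 0 := by
    intro k; rw [mul_comm]; exact hOff k
  have hOffrot : ∀ k,
      (P.ur * (1 - P.b k) + (-P.ur - P.br)) * (P.uc * (1 - P.a k) + (-P.uc - P.bc)) < 0 := by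
    intro k
    have e : (P.ur * (1 - P.b k) + (-P.ur - P.br)) * (P.uc * (1 - P.a k) + (-P.uc - P.bc))
        = (P.ur * P.b k + P.br) * (P.uc * P.a k + P.bc) := by ring
    rw [e]; exact hOff k
  rcases not_and_or.mp hint with h | hrest
  · -- 0 < br : swap players
    push_neg at h
    apply P.concl_of_swap
    exact P.swap.bcase (fun k => hOffswap k) h
  rcases not_and_or.mp hrest with h | hrest2
  · -- ur + br < 0 : swap then rotate
    push_neg at h
    apply P.concl_of_swap
    apply P.swap.concl_of_rot
    apply P.swap.rot.bcase
    · intro k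
      show (P.uc * (1 - P.a k) + (-P.uc - P.bc)) * (P.ur * (1 - P.b k) + (-P.ur - P.br)) < 0
      rw [mul_comm]; exact hOffrot k
    · show (0:ℝ) < -P.ur - P.br
      linarith
  rcases not_and_or.mp hrest2 with h | h
  · -- 0 < bc : direct
    push_neg at h
    exact P.bcase hOff h
  · -- uc + bc < 0 : rotate
    push_neg at h
    apply P.concl_of_rot
    apply P.rot.bcase
    · intro k
      exact hOffrot k
    · show (0:ℝ) < -P.uc - P.bc
      linarith

end GP

lemma Vr2_diff (R : Matrix (Fin 2) (Fin 2) ℝ) (α α' β : ℝ) :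
    Vr2 R α β - Vr2 R α' β = (α - α') * dVr2 R β := by
  unfold Vr2 dVr2 ur2 br2; ring

lemma Vc2_diff (C : Matrix (Fin 2) (Fin 2) ℝ) (α β β' : ℝ) :
    Vc2 C α β - Vc2 C α β' = (β - β') * dVc2 C α := by
  unfold Vc2 dVc2 uc2 bc2; ring

lemma nash_char (R C : Matrix (Fin 2) (Fin 2) ℝ) {x y : ℝ}
    (hx : x ∈ Set.Icc (0:ℝ) 1) (hy : y ∈ Set.Icc (0:ℝ) 1)
    (h1 : 0 < dVr2 R y → x = 1) (h2 : dVr2 R y < 0 → x = 0)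
    (h3 : 0 < dVc2 C x → y = 1) (h4 : dVc2 C x < 0 → y = 0) :
    IsNash2 R C x y := by
  refine ⟨hx, hy, ?_, ?_⟩
  · intro α' hα'
    have e := Vr2_diff R x α' y
    rcases lt_trichotomy (dVr2 R y) 0 with h | h | h
    · have hx0 := h2 h
      rw [hx0] at e ⊢
      nlinarith [hα'.1, hα'.2]
    · rw [h, mul_zero] at e
      linarith
    · have hx1 := h1 h
      rw [hx1] at e ⊢
      nlinarith [hα'.1, hα'.2]
  · intro β' hβ'
    have e := Vc2_diff C x y β'
    rcases lt_trichotomy (dVc2 C x) 0 with h | h | h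
    · have hy0 := h4 h
      rw [hy0] at e ⊢
      nlinarith [hβ'.1, hβ'.2]
    · rw [h, mul_zero] at e
      linarith
    · have hy1 := h3 h
      rw [hy1] at e ⊢
      nlinarith [hβ'.1, hβ'.2]

lemma spread_pair (M : Matrix (Fin 2) (Fin 2) ℝ) (i j i' j' : Fin 2) :
    M i j - M i' j' ≤ spread2 M := by
  unfold spread2
  have h1 : M i j ≤ Finset.univ.sup' Finset.univ_nonempty
      (fun p : Fin 2 × Fin 2 => M p.1 p.2) :=
    Finset.le_sup' (f := fun p : Fin 2 × Fin 2 => M p.1 p.2) (Finset.mem_univ (i, j))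
  have h2 : Finset.univ.inf' Finset.univ_nonempty
      (fun p : Fin 2 × Fin 2 => M p.1 p.2) ≤ M i' j' :=
    Finset.inf'_le (f := fun p : Fin 2 × Fin 2 => M p.1 p.2) (Finset.mem_univ (i', j'))
  linarith

lemma spread_nonneg (M : Matrix (Fin 2) (Fin 2) ℝ) : 0 ≤ spread2 M := by
  have := spread_pair M 0 0 0 0; linarith

lemma abs_ur_le (R : Matrix (Fin 2) (Fin 2) ℝ) : |ur2 R| ≤ 2 * spread2 R := by
  rw [abs_le]
  constructor
  · have h1 := spread_pair R 0 1 0 0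
    have h2 := spread_pair R 1 0 1 1
    unfold ur2; linarith
  · have h1 := spread_pair R 0 0 0 1
    have h2 := spread_pair R 1 1 1 0
    unfold ur2; linarith

lemma abs_uc_le (C : Matrix (Fin 2) (Fin 2) ℝ) : |uc2 C| ≤ 2 * spread2 C :=
  abs_ur_le C

end GSPP
end

set_option maxHeartbeats 1600000

/-- Lemma 4: in a 2×2 game with u_r u_c > 0, if both agents
follow GA-SPP (Conditions 1–3), then from any initial strategy pair the
strategies converge to a point that is a Nash equilibrium. -/
theorem stmt10 (R C : Matrix (Fin 2) (Fin 2) ℝ)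
    (hU : 0 < ur2 R * uc2 C)
    (γ₀ η : ℝ) (hcond : Conds2 R C γ₀ η)
    (γ a b abar bbar : ℕ → ℝ)
    (hγ₀ : γ 0 = γ₀) (ha₀ : a 0 ∈ Set.Icc (0 : ℝ) 1) (hb₀ : b 0 ∈ Set.Icc (0 : ℝ) 1)
    (hrun : GASPP2Run R C η γ a b abar bbar) :
    ∃ αs βs : ℝ, IsNash2 R C αs βs ∧
      Filter.Tendsto (fun k => (a k, b k)) Filter.atTop (nhds (αs, βs)) := by
  classical
  obtain ⟨hγ0pos, hηpos, hcsq, hcη, hcγ⟩ := hcond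
  -- basic facts about the run
  have hγpos : ∀ k, 0 < γ k ∧ γ k ≤ γ₀ := by
    intro k
    induction k with
    | zero => rw [hγ₀]; exact ⟨hγ0pos, le_refl _⟩
    | succ n ih =>
        obtain ⟨hp1, hp2, hfix, helse⟩ := hrun n
        by_cases hf : abar (n+1) = a n ∧ bbar (n+1) = b n
        · rw [(hfix hf).2.2]; exact ih
        · obtain ⟨hA', hB', hsh, hkeep⟩ := helse hf
          by_cases hfr : a (n+1) = a n ∧ b (n+1) = b n
          · obtain ⟨μ, hμ0, hμ1, he⟩ := hsh hfr
            rw [he]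
            exact ⟨mul_pos hμ0 ih.1, by nlinarith [ih.1, ih.2]⟩
          · rw [hkeep hfr]; exact ih
  have hbox : ∀ k, a k ∈ Set.Icc (0:ℝ) 1 ∧ b k ∈ Set.Icc (0:ℝ) 1 := by
    intro k
    induction k with
    | zero => exact ⟨ha₀, hb₀⟩
    | succ n ih =>
        obtain ⟨hp1, hp2, hfix, helse⟩ := hrun n
        by_cases hf : abar (n+1) = a n ∧ bbar (n+1) = b n
        · obtain ⟨e1, e2, _⟩ := hfix hf
          rw [e1, e2]; exact ih
        · obtain ⟨hA', hB', _, _⟩ := helse hf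
          rw [hA', hB']
          exact ⟨GSPP.clamp_mem _, GSPP.clamp_mem _⟩
  by_cases hterm : ∃ k, abar (k+1) = a k ∧ bbar (k+1) = b k
  · -- the algorithm terminates: constant from k₀ on, fixed point is Nash
    obtain ⟨k₀, hfix0⟩ := hterm
    have hfa : clamp (a k₀ + γ k₀ * dVr2 R (b k₀)) = a k₀ := by
      rw [← (hrun k₀).1]; exact hfix0.1
    have hfb : clamp (b k₀ + γ k₀ * dVc2 C (a k₀)) = b k₀ := by
      rw [← (hrun k₀).2.1]; exact hfix0.2
    have hconst : ∀ j, a (k₀+j) = a k₀ ∧ b (k₀+j) = b k₀ ∧ γ (k₀+j) = γ k₀ := by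
      intro j
      induction j with
      | zero => exact ⟨rfl, rfl, rfl⟩
      | succ n ih =>
          obtain ⟨ea, eb, eγ⟩ := ih
          obtain ⟨hp1, hp2, hfixn, _⟩ := hrun (k₀+n)
          have hf : abar (k₀+n+1) = a (k₀+n) ∧ bbar (k₀+n+1) = b (k₀+n) := by
            constructor
            · rw [hp1, ea, eb, eγ, hfa, ← ea]
            · rw [hp2, ea, eb, eγ, hfb, ← eb]
          obtain ⟨e1, e2, e3⟩ := hfixn hf
          exact ⟨by rw [Nat.add_succ, e1, ea], by rw [Nat.add_succ, e2, eb],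
            by rw [Nat.add_succ, e3, eγ]⟩
    have hγk : 0 < γ k₀ := (hγpos k₀).1
    have hn1 : 0 < dVr2 R (b k₀) → a k₀ = 1 := fun h =>
      GSPP.clamp_fix_pos (hbox k₀).1 hfa (mul_pos hγk h)
    have hn2 : dVr2 R (b k₀) < 0 → a k₀ = 0 := fun h =>
      GSPP.clamp_fix_neg (hbox k₀).1 hfa (mul_neg_of_pos_of_neg hγk h)
    have hn3 : 0 < dVc2 C (a k₀) → b k₀ = 1 := fun h =>
      GSPP.clamp_fix_pos (hbox k₀).2 hfb (mul_pos hγk h)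
    have hn4 : dVc2 C (a k₀) < 0 → b k₀ = 0 := fun h =>
      GSPP.clamp_fix_neg (hbox k₀).2 hfb (mul_neg_of_pos_of_neg hγk h)
    have ta : Filter.Tendsto a Filter.atTop (nhds (a k₀)) := by
      apply Filter.Tendsto.congr' _ tendsto_const_nhds
      filter_upwards [Filter.eventually_ge_atTop k₀] with k hk
      obtain ⟨j, rfl⟩ := Nat.exists_eq_add_of_le hk
      exact ((hconst j).1).symm
    have tb : Filter.Tendsto b Filter.atTop (nhds (b k₀)) := by
      apply Filter.Tendsto.congr' _ tendsto_const_nhds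
      filter_upwards [Filter.eventually_ge_atTop k₀] with k hk
      obtain ⟨j, rfl⟩ := Nat.exists_eq_add_of_le hk
      exact ((hconst j).2.1).symm
    exact ⟨a k₀, b k₀,
      GSPP.nash_char R C (hbox k₀).1 (hbox k₀).2 hn1 hn2 hn3 hn4,
      Filter.Tendsto.prodMk_nhds ta tb⟩
  · -- the algorithm never terminates: the update equations hold at every step
    have hupd : ∀ k, a (k+1) = clamp (a k + η * dVr2 R (bbar (k+1))) ∧
        b (k+1) = clamp (b k + η * dVc2 C (abar (k+1))) := by
      intro k
      obtain ⟨_, _, _, helse⟩ := hrun k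
      have h := helse (fun hf => hterm ⟨k, hf⟩)
      exact ⟨h.1, h.2.1⟩
    -- numerical bounds
    have hδr0 := GSPP.spread_nonneg R
    have hδc0 := GSPP.spread_nonneg C
    have habsr := GSPP.abs_ur_le R
    have habsc := GSPP.abs_uc_le C
    have hSpos : 0 < spread2 R + spread2 C := by
      rcases lt_or_eq_of_le (by linarith : (0:ℝ) ≤ spread2 R + spread2 C) with h | h
      · exact h
      · exfalso
        have h1 : |ur2 R| ≤ 0 := by linarith
        have h2 : ur2 R = 0 := abs_eq_zero.mp (le_antisymm h1 (abs_nonneg _))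
        rw [h2, zero_mul] at hU
        exact lt_irrefl 0 hU
    have hetaS : η * (spread2 R + spread2 C) < 1 := by
      rw [lt_div_iff₀ hSpos] at hcη; exact hcη
    have hgamS : γ₀ * (spread2 R + spread2 C) < 1 := by
      rw [lt_div_iff₀ hSpos] at hcγ; exact hcγ
    have hprodle : ur2 R * uc2 C ≤ (spread2 R + spread2 C)^2 := by
      have h1 : ur2 R * uc2 C = |ur2 R| * |uc2 C| := by
        rw [← abs_mul, abs_of_pos hU]
      have h2 : |ur2 R| * |uc2 C| ≤ (2 * spread2 R) * (2 * spread2 C) :=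
        mul_le_mul habsr habsc (abs_nonneg _) (by linarith)
      nlinarith [sq_nonneg (spread2 R - spread2 C)]
    have hsqle : Real.sqrt (ur2 R * uc2 C) ≤ spread2 R + spread2 C := by
      have h := Real.sqrt_le_sqrt hprodle
      rwa [Real.sqrt_sq (by linarith)] at h
    have hsqnn : 0 ≤ Real.sqrt (ur2 R * uc2 C) := Real.sqrt_nonneg _
    have hcbound : η * Real.sqrt (ur2 R * uc2 C) ≤ 1 := by
      nlinarith [mul_le_mul_of_nonneg_left hsqle hηpos.le]
    have hdbound : γ₀ * Real.sqrt (ur2 R * uc2 C) < 1 := by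
      nlinarith [mul_le_mul_of_nonneg_left hsqle hγ0pos.le]
    rcases mul_pos_iff.mp hU with ⟨hurpos, hucpos⟩ | ⟨hurneg, hucneg⟩
    · -- u_r > 0, u_c > 0 : direct instantiation
      have hconcl := GSPP.GP.concl
        { ur := ur2 R, uc := uc2 C, br := br2 R, bc := bc2 C,
          η := η, γ₀ := γ₀, γ := γ, a := a, b := b, ab := abar, bb := bbar,
          hur := hurpos, huc := hucpos, hη := hηpos, hγ0 := hγ0pos,
          hc := hcbound, hd := hdbound, hγ := hγpos, hbox := hbox,
          hab := fun k => (hrun k).1,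
          hbb := fun k => (hrun k).2.1,
          hA := fun k => (hupd k).1,
          hB := fun k => (hupd k).2 }
      obtain ⟨x, y, hx, hy, ta, tb, c1, c2, c3, c4⟩ := hconcl
      exact ⟨x, y, GSPP.nash_char R C hx hy c1 c2 c3 c4,
        Filter.Tendsto.prodMk_nhds ta tb⟩
    · -- u_r < 0, u_c < 0 : flip the column strategy
      have hconcl := GSPP.GP.concl
        { ur := -(ur2 R), uc := -(uc2 C), br := ur2 R + br2 R, bc := -(bc2 C),
          η := η, γ₀ := γ₀, γ := γ, a := a, b := fun k => 1 - b k,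
          ab := abar, bb := fun k => 1 - bbar k,
          hur := neg_pos.mpr hurneg, huc := neg_pos.mpr hucneg,
          hη := hηpos, hγ0 := hγ0pos,
          hc := by
            rw [show -(ur2 R) * -(uc2 C) = ur2 R * uc2 C by ring]
            exact hcbound,
          hd := by
            rw [show -(ur2 R) * -(uc2 C) = ur2 R * uc2 C by ring]
            exact hdbound,
          hγ := hγpos,
          hbox := fun k => by
            obtain ⟨h1, ⟨h2, h3⟩⟩ := hbox k
            refine ⟨h1, ⟨?_, ?_⟩⟩
            · show (0:ℝ) ≤ 1 - b k; linarith
            · show (1 - b k : ℝ) ≤ 1; linarith,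
          hab := fun k => by
            rw [show a k + γ k * (-(ur2 R) * (1 - b k) + (ur2 R + br2 R))
                = a k + γ k * dVr2 R (b k) from by unfold dVr2; ring]
            exact (hrun k).1,
          hbb := fun k => by
            rw [show (1 - b k) + γ k * (-(uc2 C) * a k + -(bc2 C))
                = 1 - (b k + γ k * dVc2 C (a k)) from by unfold dVc2; ring,
              GSPP.clamp_one_sub, ← (hrun k).2.1],
          hA := fun k => by
            rw [show a k + η * (-(ur2 R) * (1 - bbar (k+1)) + (ur2 R + br2 R))
                = a k + η * dVr2 R (bbar (k+1)) from by unfold dVr2; ring]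
            exact (hupd k).1,
          hB := fun k => by
            rw [show (1 - b k) + η * (-(uc2 C) * abar (k+1) + -(bc2 C))
                = 1 - (b k + η * dVc2 C (abar (k+1))) from by unfold dVc2; ring,
              GSPP.clamp_one_sub, ← (hupd k).2] }
      obtain ⟨x, y', hx, hy', ta, tb', c1, c2, c3, c4⟩ := hconcl
      have tb : Filter.Tendsto b Filter.atTop (nhds (1 - y')) := by
        have h := (tendsto_const_nhds (x := (1:ℝ)) (f := Filter.atTop)).sub tb'
        simpa using h
      obtain ⟨hy1, hy2⟩ := hy'
      refine ⟨x, 1 - y', GSPP.nash_char R C hx ⟨by linarith, by linarith⟩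
        ?_ ?_ ?_ ?_, Filter.Tendsto.prodMk_nhds ta tb⟩
      · intro h
        apply c1
        unfold dVr2 at h
        show (0:ℝ) < -(ur2 R) * y' + (ur2 R + br2 R)
        nlinarith [h]
      · intro h
        apply c2
        unfold dVr2 at h
        show (-(ur2 R) * y' + (ur2 R + br2 R) : ℝ) < 0
        nlinarith [h]
      · intro h
        unfold dVc2 at h
        have hc4 := c4 (by
          show (-(uc2 C) * x + -(bc2 C) : ℝ) < 0
          nlinarith [h])
        rw [hc4]
        norm_num
      · intro h
        unfold dVc2 at h
        have hc3 := c3 (by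
          show (0:ℝ) < -(uc2 C) * x + -(bc2 C)
          nlinarith [h])
        rw [hc3]
        norm_num
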